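/- Let μ be the uniform (normalized Lebesgue) probability measure on a d-dimensional convex body Ω contained in a ball of radius R. If α lies in the η-interior of Ω (the η-ball around α lies in Ω), then any minimizer y⋆ of F(y) = log ∫_Ω exp(⟨−y, x − α⟩) dμ(x) satisfies ‖y⋆‖ ≤ (2d/η) · log(4R/η). -/

import Mathlib

open MeasureTheory

/-- Bounding box for convex bodies: let `μ` be the uniform (normalized Lebesgue)
probability measure on a `d`-dimensional convex body `Ω` contained in a ball of
radius `R`. If the `η`-ball around `α` lies in `Ω`, then any minimizer `y⋆` of
`y ↦ log ∫_Ω exp⟨−y, x−α⟩ dμ` satisfies `‖y⋆‖ ≤ (2d/η) log (4R/η)`. -/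
theorem stmt_10 (d : ℕ) (Ω : Set (EuclideanSpace ℝ (Fin d)))
    (hcompact : IsCompact Ω) (hconv : Convex ℝ Ω) (hne : (interior Ω).Nonempty)
    (R : ℝ) (hR : Ω ⊆ Metric.closedBall 0 R)
    (α : EuclideanSpace ℝ (Fin d)) (η : ℝ) (hη : 0 < η)
    (hball : Metric.ball α η ⊆ Ω)
    (ystar : EuclideanSpace ℝ (Fin d))
    (hmin : ∀ y : EuclideanSpace ℝ (Fin d),
      Real.log (∫ x, Real.exp (inner ℝ (-ystar) (x - α) : ℝ)
          ∂((volume Ω)⁻¹ • volume.restrict Ω)) ≤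
        Real.log (∫ x, Real.exp (inner ℝ (-y) (x - α) : ℝ)
          ∂((volume Ω)⁻¹ • volume.restrict Ω))) :
    ‖ystar‖ ≤ (2 * d / η) * Real.log (4 * R / η) := by
  rcases Nat.eq_zero_or_pos d with hd | hd
  · subst hd
    have : ystar = 0 := Subsingleton.elim _ _
    simp [this]
  -- d ≥ 1 from here on
  have hΩcl : Metric.closedBall α η ⊆ Ω := by
    rw [← closure_ball α hη.ne']
    exact hcompact.isClosed.closure_subset_iff.mpr hball
  -- η ≤ 2 R
  obtain ⟨i⟩ : Nonempty (Fin d) := ⟨⟨0, hd⟩⟩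
  have hη2R : η ≤ 2 * R := by
    set e : EuclideanSpace ℝ (Fin d) := EuclideanSpace.single i (1:ℝ) with he
    have hne1 : ‖e‖ = 1 := by simp [he, EuclideanSpace.norm_single]
    have h1 : α + η • e ∈ Ω := by
      apply hΩcl
      simp [Metric.mem_closedBall, dist_eq_norm, norm_smul, hne1, abs_of_pos hη, hη.le]
    have h2 : α ∈ Ω := hΩcl (Metric.mem_closedBall_self hη.le)
    have hb1 : ‖α + η • e‖ ≤ R := by simpa [dist_eq_norm] using hR h1
    have hb2 : ‖α‖ ≤ R := by simpa [dist_eq_norm] using hR h2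
    have : ‖η • e‖ ≤ ‖α + η • e‖ + ‖α‖ := by
      have := norm_sub_le (α + η • e) α
      simpa using this
    rw [norm_smul, hne1, Real.norm_eq_abs, abs_of_pos hη] at this
    linarith
  have hRpos : 0 < R := by linarith
  have hL : 0 ≤ Real.log (4 * R / η) := by
    apply Real.log_nonneg
    rw [le_div_iff₀ hη]
    linarith
  by_cases hy : ystar = 0
  · rw [hy, norm_zero]
    have : (0:ℝ) ≤ 2 * d / η := by positivity
    exact mul_nonneg this hL
  -- main case
  set μ : Measure (EuclideanSpace ℝ (Fin d)) := (volume Ω)⁻¹ • volume.restrict Ω with hμdef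
  have hΩmeas : MeasurableSet Ω := hcompact.measurableSet
  have hV0 : 0 < volume Ω := lt_of_lt_of_le (Metric.measure_ball_pos _ α hη) (measure_mono hball)
  have hVtop : volume Ω < ⊤ := hcompact.measure_lt_top
  have hyn : 0 < ‖ystar‖ := norm_pos_iff.mpr hy
  set u : EuclideanSpace ℝ (Fin d) := ‖ystar‖⁻¹ • (-ystar) with hu
  have hun : ‖u‖ = 1 := by
    rw [hu, norm_smul, norm_neg, Real.norm_eq_abs, abs_inv, abs_of_pos hyn,
      inv_mul_cancel₀ hyn.ne']
  set c : EuclideanSpace ℝ (Fin d) := α + (3 * η / 4) • u with hc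
  set C : Set (EuclideanSpace ℝ (Fin d)) := Metric.closedBall c (η / 4) with hC
  have hCΩ : C ⊆ Ω := by
    intro x hx
    apply hΩcl
    rw [Metric.mem_closedBall] at hx ⊢
    have hdca : dist c α = 3 * η / 4 := by
      rw [hc, dist_eq_norm, add_sub_cancel_left, norm_smul, hun, Real.norm_eq_abs,
        abs_of_pos (by linarith : (0:ℝ) < 3 * η / 4), mul_one]
    calc dist x α ≤ dist x c + dist c α := dist_triangle _ _ _
      _ ≤ η / 4 + 3 * η / 4 := by linarith
      _ = η := by ring
  have hinner : ∀ x ∈ C, η * ‖ystar‖ / 2 ≤ (inner ℝ (-ystar) (x - α) : ℝ) := by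
    intro x hx
    have hxc : ‖x - c‖ ≤ η / 4 := by
      rw [← dist_eq_norm]; exact hx
    have hdecomp : x - α = (x - c) + (3 * η / 4) • u := by
      rw [hc]; abel
    have hself : (inner ℝ (-ystar) u : ℝ) = ‖ystar‖ := by
      rw [hu, real_inner_smul_right, real_inner_self_eq_norm_sq, norm_neg]
      field_simp
    have hcs : (-(‖ystar‖ * ‖x - c‖)) ≤ (inner ℝ (-ystar) (x - c) : ℝ) := by
      have := abs_real_inner_le_norm (-ystar) (x - c)
      rw [norm_neg] at this
      have := neg_abs_le (inner ℝ (-ystar) (x - c) : ℝ)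
      nlinarith [abs_real_inner_le_norm (-ystar) (x - c)]
    rw [hdecomp, inner_add_right, real_inner_smul_right, hself]
    nlinarith
  -- integrability
  have hf_cont : Continuous fun x : EuclideanSpace ℝ (Fin d) =>
      Real.exp (inner ℝ (-ystar) (x - α) : ℝ) :=
    Real.continuous_exp.comp (continuous_const.inner (continuous_id.sub continuous_const))
  have hinvtop : (volume Ω)⁻¹ ≠ ⊤ := by
    simp [ENNReal.inv_ne_top, hV0.ne']
  have hfi : Integrable (fun x => Real.exp (inner ℝ (-ystar) (x - α) : ℝ)) μ :=
    Integrable.smul_measure (hf_cont.continuousOn.integrableOn_compact hcompact) hinvtop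
  -- measure of the cap
  have hμC : μ C = (volume Ω)⁻¹ * volume C := by
    rw [hμdef, Measure.smul_apply, Measure.restrict_apply measurableSet_closedBall,
      Set.inter_eq_left.mpr hCΩ, smul_eq_mul]
  have hvC0 : 0 < volume C := Metric.measure_closedBall_pos _ _ (by linarith)
  have hvCtop : volume C < ⊤ := (isCompact_closedBall _ _).measure_lt_top
  have hμC0 : 0 < (μ C).toReal := by
    rw [hμC, ENNReal.toReal_mul]
    apply mul_pos
    · rw [ENNReal.toReal_inv]
      exact inv_pos.mpr (ENNReal.toReal_pos hV0.ne' hVtop.ne)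
    · exact ENNReal.toReal_pos hvC0.ne' hvCtop.ne
  -- integral lower bound
  have step1 : ∫ x in C, Real.exp (inner ℝ (-ystar) (x - α) : ℝ) ∂μ ≤
      ∫ x, Real.exp (inner ℝ (-ystar) (x - α) : ℝ) ∂μ :=
    setIntegral_le_integral hfi (ae_of_all _ fun x => (Real.exp_pos _).le)
  have hμCfin : μ C < ⊤ := by
    rw [hμC]
    exact ENNReal.mul_lt_top hinvtop.lt_top hvCtop
  have step2 : (μ C).toReal * Real.exp (η * ‖ystar‖ / 2) ≤
      ∫ x in C, Real.exp (inner ℝ (-ystar) (x - α) : ℝ) ∂μ := by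
    have hconst : IntegrableOn (fun _ => Real.exp (η * ‖ystar‖ / 2)) C μ := by
      apply (integrableOn_const_iff (by simp)).mpr
      exact Or.inr hμCfin
    have := setIntegral_mono_on hconst hfi.integrableOn measurableSet_closedBall
      (fun x hx => Real.exp_le_exp.mpr (hinner x hx))
    rwa [setIntegral_const, smul_eq_mul] at this
  have hIpos : 0 < ∫ x, Real.exp (inner ℝ (-ystar) (x - α) : ℝ) ∂μ :=
    lt_of_lt_of_le (mul_pos hμC0 (Real.exp_pos _)) (step2.trans step1)
  -- F(ystar) ≤ F(0) = 0
  have hF0 : Real.log (∫ x, Real.exp (inner ℝ (-ystar) (x - α) : ℝ) ∂μ) ≤ 0 := by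
    have h := hmin 0
    have : (∫ x, Real.exp (inner ℝ (-(0:EuclideanSpace ℝ (Fin d))) (x - α) : ℝ) ∂μ) = 1 := by
      simp only [neg_zero, inner_zero_left, Real.exp_zero]
      rw [integral_const, smul_eq_mul, mul_one]
      have : μ Set.univ = 1 := by
        rw [hμdef, Measure.smul_apply, Measure.restrict_apply_univ, smul_eq_mul,
          ENNReal.inv_mul_cancel hV0.ne' hVtop.ne]
      rw [measureReal_def, this, ENNReal.toReal_one]
    rw [this, Real.log_one] at h
    exact h
  -- combine
  have key : η * ‖ystar‖ / 2 ≤ Real.log ((μ C).toReal)⁻¹ := by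
    have hle : Real.log ((μ C).toReal * Real.exp (η * ‖ystar‖ / 2)) ≤ 0 :=
      le_trans (Real.log_le_log (mul_pos hμC0 (Real.exp_pos _)) (step2.trans step1)) hF0
    rw [Real.log_mul hμC0.ne' (Real.exp_pos _).ne', Real.log_exp] at hle
    rw [Real.log_inv]
    linarith
  -- volume ratio bound
  have hratio : ((μ C).toReal)⁻¹ ≤ (4 * R / η) ^ d := by
    set B := volume (Metric.ball (0 : EuclideanSpace ℝ (Fin d)) 1) with hB
    have hB0 : 0 < B := Metric.measure_ball_pos _ _ one_pos
    have hBtop : B < ⊤ := (Metric.isBounded_ball).measure_lt_top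
    have hb0 : 0 < B.toReal := ENNReal.toReal_pos hB0.ne' hBtop.ne
    have hvC : volume C = ENNReal.ofReal ((η/4) ^ d) * B := by
      rw [hC, Measure.addHaar_closedBall _ _ (by linarith : (0:ℝ) ≤ η/4),
        finrank_euclideanSpace_fin]
    have hvΩ : volume Ω ≤ ENNReal.ofReal (R ^ d) * B := by
      calc volume Ω ≤ volume (Metric.closedBall (0 : EuclideanSpace ℝ (Fin d)) R) :=
            measure_mono hR
        _ = ENNReal.ofReal (R ^ d) * B := by
            rw [Measure.addHaar_closedBall _ _ hRpos.le, finrank_euclideanSpace_fin]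
    have hvCr : (volume C).toReal = (η/4) ^ d * B.toReal := by
      rw [hvC, ENNReal.toReal_mul, ENNReal.toReal_ofReal (by positivity)]
    have hvΩr : (volume Ω).toReal ≤ R ^ d * B.toReal := by
      have := ENNReal.toReal_mono (by
        exact ENNReal.mul_ne_top ENNReal.ofReal_ne_top hBtop.ne) hvΩ
      rwa [ENNReal.toReal_mul, ENNReal.toReal_ofReal (by positivity)] at this
    have hμCr : ((μ C).toReal)⁻¹ = (volume Ω).toReal / (volume C).toReal := by
      rw [hμC, ENNReal.toReal_mul, ENNReal.toReal_inv]
      rw [mul_inv, inv_inv, ← div_eq_mul_inv]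
    rw [hμCr, hvCr]
    have hden : 0 < (η/4) ^ d * B.toReal := by positivity
    rw [div_le_iff₀ hden]
    have : (4 * R / η) ^ d * ((η/4) ^ d * B.toReal) = R ^ d * B.toReal := by
      rw [← mul_assoc, ← mul_pow]
      congr 2
      field_simp
    rw [this]
    exact hvΩr
  have hlogratio : Real.log ((μ C).toReal)⁻¹ ≤ d * Real.log (4 * R / η) := by
    calc Real.log ((μ C).toReal)⁻¹ ≤ Real.log ((4 * R / η) ^ d) :=
          Real.log_le_log (inv_pos.mpr hμC0) hratio
      _ = d * Real.log (4 * R / η) := Real.log_pow _ d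
  have : η * ‖ystar‖ / 2 ≤ d * Real.log (4 * R / η) := le_trans key hlogratio
  rw [div_mul_eq_mul_div, le_div_iff₀ hη]
  nlinarith
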